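/- Let π : X → B be a map of sets, {U_j}_{j ∈ J} a family of subsets of B, f_j : π⁻¹(U_j) → S¹ maps, ε > 0 and 0 ≤ δ < 1. Suppose that for every pair (j,k) with U_j ∩ U_k ≠ ∅, the Hausdorff distance (Euclidean) between f_k(π⁻¹(U_j ∩ U_k)) and S¹ is strictly less than δ, and that (Ω_{jk}) and (Λ_{jk}) are two families of matrices in O(2), indexed by pairs (j,k) with U_j ∩ U_k ≠ ∅, satisfying both ‖f_j(x) − Ω_{jk} f_k(x)‖ < ε and ‖f_j(x) − Λ_{jk} f_k(x)‖ < ε for all x ∈ π⁻¹(U_j ∩ U_k). Then for every pair (j,k) with U_j ∩ U_k ≠ ∅, ‖Ω_{jk} − Λ_{jk}‖_F < 2√2 · ε/(1−δ). -/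

import Mathlib

/-- The Frobenius norm of a real `2 × 2` matrix. -/
noncomputable def frobeniusNorm (A : Matrix (Fin 2) (Fin 2) ℝ) : ℝ :=
  Real.sqrt (∑ i, ∑ j, (A i j) ^ 2)

/-- Any two witnesses `(Ω_{jk})`, `(Λ_{jk})` of the same discrete
`(ε, δ)`-approximate local trivialization `{f_j}` satisfy, on every nonempty double
intersection, `‖Ω_{jk} − Λ_{jk}‖_F < 2√2 ε / (1 − δ)`. -/
theorem two_witnesses_are_close {X B J : Type*} (π : X → B) (U : J → Set B)
    (f : J → X → EuclideanSpace ℝ (Fin 2)) (ε δ : ℝ) (hε : 0 < ε) (hδ0 : 0 ≤ δ)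
    (hδ1 : δ < 1)
    (hsph : ∀ j, ∀ x ∈ π ⁻¹' (U j),
      f j x ∈ Metric.sphere (0 : EuclideanSpace ℝ (Fin 2)) 1)
    (hH : ∀ j k, (U j ∩ U k).Nonempty →
      EMetric.hausdorffEdist (f k '' (π ⁻¹' (U j ∩ U k)))
        (Metric.sphere (0 : EuclideanSpace ℝ (Fin 2)) 1) < ENNReal.ofReal δ)
    (Ω Λ : J → J → Matrix.orthogonalGroup (Fin 2) ℝ)
    (hΩ : ∀ j k, (U j ∩ U k).Nonempty → ∀ x ∈ π ⁻¹' (U j ∩ U k),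
      ‖f j x - Matrix.toEuclideanLin ((Ω j k : Matrix (Fin 2) (Fin 2) ℝ)) (f k x)‖ < ε)
    (hΛ : ∀ j k, (U j ∩ U k).Nonempty → ∀ x ∈ π ⁻¹' (U j ∩ U k),
      ‖f j x - Matrix.toEuclideanLin ((Λ j k : Matrix (Fin 2) (Fin 2) ℝ)) (f k x)‖ < ε) :
    ∀ j k, (U j ∩ U k).Nonempty →
      frobeniusNorm ((Ω j k : Matrix (Fin 2) (Fin 2) ℝ) - (Λ j k : Matrix (Fin 2) (Fin 2) ℝ))
        < 2 * Real.sqrt 2 * ε / (1 - δ) := by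
  intro j k hne
  set M : Matrix (Fin 2) (Fin 2) ℝ :=
    (Ω j k : Matrix (Fin 2) (Fin 2) ℝ) - (Λ j k : Matrix (Fin 2) (Fin 2) ℝ) with hM
  set T : EuclideanSpace ℝ (Fin 2) →L[ℝ] EuclideanSpace ℝ (Fin 2) :=
    LinearMap.toContinuousLinearMap (Matrix.toEuclideanLin M) with hT
  have h1δ : 0 < 1 - δ := by linarith
  -- key bound on the unit sphere
  have hTv : ∀ v : EuclideanSpace ℝ (Fin 2), ‖v‖ = 1 → ‖T v‖ < 2 * ε + δ * ‖T‖ := by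
    intro v hv
    have hv' : v ∈ Metric.sphere (0 : EuclideanSpace ℝ (Fin 2)) 1 := by
      simp [mem_sphere_iff_norm, hv]
    have h1 : EMetric.infEdist v (f k '' (π ⁻¹' (U j ∩ U k))) < ENNReal.ofReal δ := by
      calc EMetric.infEdist v (f k '' (π ⁻¹' (U j ∩ U k)))
          ≤ EMetric.hausdorffEdist (Metric.sphere (0 : EuclideanSpace ℝ (Fin 2)) 1)
            (f k '' (π ⁻¹' (U j ∩ U k))) :=
            EMetric.infEdist_le_hausdorffEdist_of_mem hv'
        _ = EMetric.hausdorffEdist (f k '' (π ⁻¹' (U j ∩ U k)))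
            (Metric.sphere (0 : EuclideanSpace ℝ (Fin 2)) 1) := EMetric.hausdorffEdist_comm
        _ < ENNReal.ofReal δ := hH j k hne
    obtain ⟨p, hp, hpd⟩ := EMetric.infEdist_lt_iff.mp h1
    obtain ⟨x, hx, rfl⟩ := hp
    have hdist : dist v (f k x) < δ := by
      have := hpd
      rw [edist_dist] at this
      exact (ENNReal.ofReal_lt_ofReal_iff_of_nonneg dist_nonneg).mp this
    have hΩx := hΩ j k hne x hx
    have hΛx := hΛ j k hne x hx
    have hTp : ‖T (f k x)‖ < 2 * ε := by
      have heq : T (f k x) =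
          (f j x - Matrix.toEuclideanLin ((Λ j k : Matrix (Fin 2) (Fin 2) ℝ)) (f k x)) -
          (f j x - Matrix.toEuclideanLin ((Ω j k : Matrix (Fin 2) (Fin 2) ℝ)) (f k x)) := by
        have hTapp : T (f k x) = Matrix.toEuclideanLin M (f k x) := rfl
        rw [hTapp, hM, map_sub, LinearMap.sub_apply]
        abel
      rw [heq]
      calc ‖_ - _‖ ≤ _ + _ := norm_sub_le _ _
        _ < 2 * ε := by linarith
    have htri : ‖T v‖ ≤ ‖T (f k x)‖ + ‖T (v - f k x)‖ := by
      have hvsplit : f k x + (v - f k x) = v := by abel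
      calc ‖T v‖ = ‖T (f k x) + T (v - f k x)‖ := by rw [← map_add, hvsplit]
        _ ≤ _ := norm_add_le _ _
    have hop : ‖T (v - f k x)‖ ≤ ‖T‖ * dist v (f k x) := by
      rw [dist_eq_norm]
      exact T.le_opNorm _
    have : ‖T‖ * dist v (f k x) ≤ ‖T‖ * δ :=
      mul_le_mul_of_nonneg_left hdist.le (norm_nonneg _)
    calc ‖T v‖ ≤ ‖T (f k x)‖ + ‖T (v - f k x)‖ := htri
      _ < 2 * ε + ‖T‖ * δ := by linarith
      _ = 2 * ε + δ * ‖T‖ := by ring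
  -- operator norm bound
  have hTnorm : ‖T‖ ≤ 2 * ε + δ * ‖T‖ :=
    ContinuousLinearMap.opNorm_le_of_unit_norm
      (by positivity) (fun x hx => (hTv x hx).le)
  have hTle : ‖T‖ ≤ 2 * ε / (1 - δ) := by
    rw [le_div_iff₀ h1δ]; nlinarith
  set c : ℝ := 2 * ε / (1 - δ) with hc
  have hcpos : 0 < c := by positivity
  -- column bounds
  have hcol : ∀ i : Fin 2, ∑ r, (M r i) ^ 2 < c ^ 2 := by
    intro i
    have he : ‖(EuclideanSpace.single i (1 : ℝ) : EuclideanSpace ℝ (Fin 2))‖ = 1 := by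
      simp [EuclideanSpace.norm_single]
    have hlt := hTv _ he
    have hval : ‖T (EuclideanSpace.single i (1 : ℝ))‖ = Real.sqrt (∑ r, (M r i) ^ 2) := by
      rw [EuclideanSpace.norm_eq]
      congr 1
      refine Finset.sum_congr rfl fun r _ => ?_
      have happ : T (EuclideanSpace.single i (1 : ℝ)) r = M r i := by
        show M.mulVec (Pi.single i (1 : ℝ)) r = M r i
        simp [Matrix.mulVec_single]
      rw [happ, Real.norm_eq_abs, sq_abs]
    have hlt2 : Real.sqrt (∑ r, (M r i) ^ 2) < c := by
      rw [← hval]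
      have : δ * ‖T‖ ≤ δ * c := mul_le_mul_of_nonneg_left hTle hδ0
      have hceq : 2 * ε + δ * c = c := by
        field_simp [hc]
        rw [hc]; field_simp [h1δ.ne']; ring
      calc ‖T (EuclideanSpace.single i (1 : ℝ))‖ < 2 * ε + δ * ‖T‖ := hlt
        _ ≤ 2 * ε + δ * c := by linarith
        _ = c := hceq
    exact (Real.sqrt_lt' hcpos).mp hlt2
  -- conclude
  have hsum : ∑ r, ∑ i, (M r i) ^ 2 < 2 * c ^ 2 := by
    rw [Finset.sum_comm]
    have h0 := hcol 0
    have h1 := hcol 1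
    have : ∑ i : Fin 2, ∑ r, (M r i) ^ 2 = (∑ r, (M r 0) ^ 2) + (∑ r, (M r 1) ^ 2) := by
      simp [Fin.sum_univ_two]
    rw [this]; linarith
  have hfinal : frobeniusNorm M < Real.sqrt (2 * c ^ 2) := by
    unfold frobeniusNorm
    exact Real.sqrt_lt_sqrt (Finset.sum_nonneg fun r _ =>
      Finset.sum_nonneg fun i _ => sq_nonneg _) hsum
  have hsqrt : Real.sqrt (2 * c ^ 2) = Real.sqrt 2 * c := by
    rw [Real.sqrt_mul (by norm_num), Real.sqrt_sq hcpos.le]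
  rw [hsqrt] at hfinal
  calc frobeniusNorm M < Real.sqrt 2 * c := hfinal
    _ = 2 * Real.sqrt 2 * ε / (1 - δ) := by rw [hc]; ring
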